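/- Fix ½ ≤ γ < ν ≤ 1 and 0 < μ < min[ν, ν²/γ − 3ν + 2]. Let v(r,t) = ((1−t)_+ + r^{2ν})^{ν/(2γ)}/r^ν + (R/r)^ν + ((ν+1)/(ν²−μ²)) r^μ. Then on the region Ω_γ = {(r,t) ∈ [R,1]×[0,T) : 1−t ≤ r^{2γ} ≤ 1} one has (∂_t − Δ_ν) v ≥ r^{μ−2}, where Δ_ν = ∂_r² + (1/r)∂_r − ν²/r². -/

import Mathlib

/-- The supersolution `v(r,t) = ((1−t)₊ + r^{2ν})^{ν/(2γ)}/r^ν + (R/r)^ν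
+ ((ν+1)/(ν²−μ²)) r^μ` of Lemma 5.2. -/
noncomputable def superSol (ν γ μ R r t : ℝ) : ℝ :=
  (max (1 - t) 0 + r ^ (2 * ν)) ^ (ν / (2 * γ)) / r ^ ν
    + (R / r) ^ ν + (ν + 1) / (ν ^ 2 - μ ^ 2) * r ^ μ

open Real Set Filter

noncomputable def Gfun (ν p μ s q c : ℝ) (x : ℝ) : ℝ :=
  (s + x ^ (2*ν)) ^ p * x ^ (-ν) + q * x ^ (-ν) + c * x ^ μ

noncomputable def G1fun (ν p μ s q c : ℝ) (x : ℝ) : ℝ :=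
  (2*ν * x ^ (2*ν-1) * p * (s + x ^ (2*ν)) ^ (p-1)) * x ^ (-ν)
    + (s + x ^ (2*ν)) ^ p * (-ν * x ^ (-ν-1))
    + q * (-ν * x ^ (-ν-1))
    + c * (μ * x ^ (μ-1))

noncomputable def G2fun (ν p μ s q c : ℝ) (x : ℝ) : ℝ :=
  ((2*ν * ((2*ν-1) * x ^ (2*ν-1-1)) * p * (s + x ^ (2*ν)) ^ (p-1)
      + 2*ν * x ^ (2*ν-1) * p * (2*ν * x ^ (2*ν-1) * (p-1) * (s + x ^ (2*ν)) ^ (p-1-1)))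
        * x ^ (-ν)
    + 2*ν * x ^ (2*ν-1) * p * (s + x ^ (2*ν)) ^ (p-1) * (-ν * x ^ (-ν-1)))
    + (2*ν * x ^ (2*ν-1) * p * (s + x ^ (2*ν)) ^ (p-1) * (-ν * x ^ (-ν-1))
      + (s + x ^ (2*ν)) ^ p * (-ν * ((-ν-1) * x ^ (-ν-1-1))))
    + q * (-ν * ((-ν-1) * x ^ (-ν-1-1)))
    + c * (μ * ((μ-1) * x ^ (μ-1-1)))

lemma hasDerivAt_Gfun {ν p μ s q c x : ℝ} (hx : 0 < x) (hs : 0 ≤ s) :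
    HasDerivAt (Gfun ν p μ s q c) (G1fun ν p μ s q c x) x := by
  have hA : (0:ℝ) < s + x ^ (2*ν) := by positivity
  have hA' : HasDerivAt (fun x : ℝ => s + x ^ (2*ν)) (2*ν * x ^ (2*ν-1)) x :=
    (Real.hasDerivAt_rpow_const (Or.inl hx.ne')).const_add s
  have hAp : HasDerivAt (fun x : ℝ => (s + x ^ (2*ν)) ^ p)
      (2*ν * x ^ (2*ν-1) * p * (s + x ^ (2*ν)) ^ (p-1)) x :=
    hA'.rpow_const (Or.inl hA.ne')
  have hxnu : HasDerivAt (fun x : ℝ => x ^ (-ν)) (-ν * x ^ (-ν-1)) x :=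
    Real.hasDerivAt_rpow_const (Or.inl hx.ne')
  have hxmu : HasDerivAt (fun x : ℝ => x ^ μ) (μ * x ^ (μ-1)) x :=
    Real.hasDerivAt_rpow_const (Or.inl hx.ne')
  exact ((hAp.mul hxnu).add (hxnu.const_mul q)).add (hxmu.const_mul c)

lemma hasDerivAt_G1fun {ν p μ s q c x : ℝ} (hx : 0 < x) (hs : 0 ≤ s) :
    HasDerivAt (G1fun ν p μ s q c) (G2fun ν p μ s q c x) x := by
  have hA : (0:ℝ) < s + x ^ (2*ν) := by positivity
  have hA' : HasDerivAt (fun x : ℝ => s + x ^ (2*ν)) (2*ν * x ^ (2*ν-1)) x :=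
    (Real.hasDerivAt_rpow_const (Or.inl hx.ne')).const_add s
  have hAp : HasDerivAt (fun x : ℝ => (s + x ^ (2*ν)) ^ p)
      (2*ν * x ^ (2*ν-1) * p * (s + x ^ (2*ν)) ^ (p-1)) x :=
    hA'.rpow_const (Or.inl hA.ne')
  have hAp1 : HasDerivAt (fun x : ℝ => (s + x ^ (2*ν)) ^ (p-1))
      (2*ν * x ^ (2*ν-1) * (p-1) * (s + x ^ (2*ν)) ^ (p-1-1)) x :=
    hA'.rpow_const (Or.inl hA.ne')
  have hxnu : HasDerivAt (fun x : ℝ => x ^ (-ν)) (-ν * x ^ (-ν-1)) x :=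
    Real.hasDerivAt_rpow_const (Or.inl hx.ne')
  have hxnu1 : HasDerivAt (fun x : ℝ => x ^ (-ν-1)) ((-ν-1) * x ^ (-ν-1-1)) x :=
    Real.hasDerivAt_rpow_const (Or.inl hx.ne')
  have hx2ν1 : HasDerivAt (fun x : ℝ => x ^ (2*ν-1)) ((2*ν-1) * x ^ (2*ν-1-1)) x :=
    Real.hasDerivAt_rpow_const (Or.inl hx.ne')
  have hxmu1 : HasDerivAt (fun x : ℝ => x ^ (μ-1)) ((μ-1) * x ^ (μ-1-1)) x :=
    Real.hasDerivAt_rpow_const (Or.inl hx.ne')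
  have hU1 := (((hx2ν1.const_mul (2*ν)).mul_const p).mul hAp1).mul hxnu
  have hU2 := hAp.mul (hxnu1.const_mul (-ν))
  have hU3 := (hxnu1.const_mul (-ν)).const_mul q
  have hU4 := (hxmu1.const_mul μ).const_mul c
  exact ((hU1.add hU2).add hU3).add hU4

lemma deltaNu_eq {ν p μ s q c r : ℝ} (hr : 0 < r) (hs : 0 ≤ s) :
    G2fun ν p μ s q c r + r⁻¹ * G1fun ν p μ s q c r - ν^2 / r^2 * Gfun ν p μ s q c r
      = 4*ν^2*p*(p-1) * ((s + r ^ (2*ν)) ^ p / ((s + r ^ (2*ν)) * (s + r ^ (2*ν))))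
          * (r^ν * r^ν * r^ν / (r*r))
        + c*(μ^2-ν^2) * (r^μ / (r*r)) := by
  have hA : (0:ℝ) < s + r ^ (2*ν) := by positivity
  have hE : (0:ℝ) < r ^ ν := Real.rpow_pos_of_pos hr ν
  unfold G2fun G1fun Gfun
  set A := s + r ^ (2*ν) with hAdef
  have e1 : r ^ (2*ν-1) = r^ν * r^ν / r := by
    rw [show 2*ν-1 = ν+ν-1 by ring, Real.rpow_sub hr, Real.rpow_add hr, Real.rpow_one]
  have e2 : r ^ (2*ν-1-1) = r^ν * r^ν / r / r := by
    rw [show 2*ν-1-1 = ν+ν-1-1 by ring, Real.rpow_sub hr, Real.rpow_sub hr,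
      Real.rpow_add hr, Real.rpow_one]
  have e3 : r ^ (-ν) = (r^ν)⁻¹ := Real.rpow_neg hr.le ν
  have e4 : r ^ (-ν-1) = (r^ν)⁻¹ / r := by
    rw [Real.rpow_sub hr, Real.rpow_one, Real.rpow_neg hr.le]
  have e5 : r ^ (-ν-1-1) = (r^ν)⁻¹ / r / r := by
    rw [Real.rpow_sub hr, Real.rpow_sub hr, Real.rpow_one, Real.rpow_neg hr.le]
  have e6 : r ^ (μ-1) = r^μ / r := by rw [Real.rpow_sub hr, Real.rpow_one]
  have e7 : r ^ (μ-1-1) = r^μ / r / r := by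
    rw [Real.rpow_sub hr, Real.rpow_sub hr, Real.rpow_one]
  have a1 : A ^ (p-1) = A^p / A := by rw [Real.rpow_sub hA, Real.rpow_one]
  have a2 : A ^ (p-1-1) = A^p / A / A := by
    rw [Real.rpow_sub hA, Real.rpow_sub hA, Real.rpow_one]
  rw [e2, e1, e5, e4, e3, e7, e6, a2, a1]
  field_simp
  ring


set_option maxHeartbeats 1000000 in
/-- Lemma 5.2, inequality (5.8): for `½ ≤ γ < ν ≤ 1` and
`0 < μ < min[ν, ν²/γ − 3ν + 2]`, on the region
`Ω_γ = {(r,t) ∈ [R,1]×[0,T) : 1−t ≤ r^{2γ} ≤ 1}` (with `0 < R < 1`, `T > 1`), the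
function `v` satisfies `(∂_t − Δ_ν) v ≥ r^{μ−2}`, where
`Δ_ν = ∂_r² + r⁻¹ ∂_r − ν² r⁻²`. -/
theorem stmt14 (γ ν μ R T : ℝ) (hγ : 1 / 2 ≤ γ) (hγν : γ < ν) (hν : ν ≤ 1)
    (hμ0 : 0 < μ) (hμ : μ < min ν (ν ^ 2 / γ - 3 * ν + 2))
    (hR0 : 0 < R) (hR1 : R < 1) (hT : 1 < T) :
    ∀ r t : ℝ, R ≤ r → r ≤ 1 → 0 ≤ t → t < T →
      1 - t ≤ r ^ (2 * γ) → r ^ (2 * γ) ≤ 1 →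
      deriv (fun t' => superSol ν γ μ R r t') t -
          (deriv (deriv (fun r' => superSol ν γ μ R r' t)) r
            + r⁻¹ * deriv (fun r' => superSol ν γ μ R r' t) r
            - ν ^ 2 / r ^ 2 * superSol ν γ μ R r t) ≥
        r ^ (μ - 2) := by
  intro r t hRr hr1 ht0 htT hcon1 hcon2
  have hγ0 : (0:ℝ) < γ := by linarith
  have hν0 : (0:ℝ) < ν := by linarith
  have hr : (0:ℝ) < r := lt_of_lt_of_le hR0 hRr
  have hμν : μ < ν := lt_of_lt_of_le hμ (min_le_left _ _)
  have hμ2 : μ < ν^2/γ - 3*ν + 2 := lt_of_lt_of_le hμ (min_le_right _ _)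
  have hs : (0:ℝ) ≤ max (1-t) 0 := le_max_right _ _
  have hp0 : (0:ℝ) < ν/(2*γ) := by positivity
  have hp1 : ν/(2*γ) ≤ 1 := by rw [div_le_one (by linarith)]; linarith
  have hpν : ν/(2*γ) ≤ ν := div_le_self hν0.le (by linarith)
  have hK : (0:ℝ) < r ^ (2*ν) := Real.rpow_pos_of_pos hr _
  have hE : (0:ℝ) < r ^ ν := Real.rpow_pos_of_pos hr ν
  have hM : (0:ℝ) < r^μ/(r*r) := by positivity
  have hb5 : r ^ (μ-2) = r^μ/(r*r) := by
    rw [show μ-2 = μ-1-1 by ring, Real.rpow_sub hr, Real.rpow_sub hr, Real.rpow_one, div_div]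
  -- spatial derivatives
  have hfeq : ∀ x ∈ Ioi (0:ℝ), superSol ν γ μ R x t
      = Gfun ν (ν/(2*γ)) μ (max (1-t) 0) (R^ν) ((ν+1)/(ν^2-μ^2)) x := by
    intro x hx
    simp only [superSol, Gfun]
    rw [Real.div_rpow hR0.le (le_of_lt hx), Real.rpow_neg (le_of_lt hx)]
    ring
  have hmem : ∀ x : ℝ, 0 < x → (fun r' => superSol ν γ μ R r' t)
      =ᶠ[nhds x] Gfun ν (ν/(2*γ)) μ (max (1-t) 0) (R^ν) ((ν+1)/(ν^2-μ^2)) := by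
    intro x hx
    filter_upwards [isOpen_Ioi.mem_nhds (show x ∈ Ioi (0:ℝ) from hx)] with y hy
    exact hfeq y hy
  have hderiv1 : ∀ x ∈ Ioi (0:ℝ), deriv (fun r' => superSol ν γ μ R r' t) x
      = G1fun ν (ν/(2*γ)) μ (max (1-t) 0) (R^ν) ((ν+1)/(ν^2-μ^2)) x := by
    intro x hx
    exact ((hasDerivAt_Gfun hx hs).congr_of_eventuallyEq (hmem x hx)).deriv
  have hd2 : deriv (deriv (fun r' => superSol ν γ μ R r' t)) r
      = G2fun ν (ν/(2*γ)) μ (max (1-t) 0) (R^ν) ((ν+1)/(ν^2-μ^2)) r := by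
    have h1 : deriv (fun r' => superSol ν γ μ R r' t)
        =ᶠ[nhds r] G1fun ν (ν/(2*γ)) μ (max (1-t) 0) (R^ν) ((ν+1)/(ν^2-μ^2)) := by
      filter_upwards [isOpen_Ioi.mem_nhds (show r ∈ Ioi (0:ℝ) from hr)] with y hy
      exact hderiv1 y hy
    rw [h1.deriv_eq, (hasDerivAt_G1fun hr hs).deriv]
  -- time derivative bound
  have htb : deriv (fun t' => superSol ν γ μ R r t') t ≥ -(ν * (r^μ/(r*r))) := by
    rcases lt_trichotomy t 1 with ht1 | ht1 | ht1
    · -- t < 1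
      have hbase : (0:ℝ) < 1 - t + r ^ (2*ν) := by linarith
      have hev : (fun t' => superSol ν γ μ R r t')
          =ᶠ[nhds t] fun t' => (1 - t' + r ^ (2*ν)) ^ (ν/(2*γ)) / r^ν
            + ((R/r)^ν + (ν+1)/(ν^2-μ^2) * r^μ) := by
        filter_upwards [Iio_mem_nhds ht1] with y hy
        simp only [superSol]
        rw [max_eq_left (by simp only [mem_Iio] at hy; linarith : (0:ℝ) ≤ 1 - y)]
        ring
      have h0 : HasDerivAt (fun t' : ℝ => 1 - t' + r ^ (2*ν)) (-1) t :=
        ((hasDerivAt_id t).const_sub 1).add_const _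
      have hD : HasDerivAt (fun t' : ℝ => (1 - t' + r ^ (2*ν)) ^ (ν/(2*γ)) / r^ν
            + ((R/r)^ν + (ν+1)/(ν^2-μ^2) * r^μ))
          (-1 * (ν/(2*γ)) * (1 - t + r ^ (2*ν)) ^ (ν/(2*γ)-1) / r^ν) t :=
        ((h0.rpow_const (Or.inl hbase.ne')).div_const _).add_const _
      have hderiv_t : deriv (fun t' => superSol ν γ μ R r t') t
          = -1 * (ν/(2*γ)) * (1 - t + r ^ (2*ν)) ^ (ν/(2*γ)-1) / r^ν :=
        (hD.congr_of_eventuallyEq hev).deriv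
      rw [hderiv_t]
      have hb1 : (1 - t + r ^ (2*ν)) ^ (ν/(2*γ)-1) ≤ (r ^ (2*ν)) ^ (ν/(2*γ)-1) :=
        Real.rpow_le_rpow_of_nonpos hK (by linarith) (by linarith)
      have hb2 : (r ^ (2*ν)) ^ (ν/(2*γ)-1) = r ^ (2*ν*(ν/(2*γ)-1)) :=
        (Real.rpow_mul hr.le _ _).symm
      have hexp : μ - 2 ≤ 2*ν*(ν/(2*γ)-1) - ν := by
        have h2νp : 2*ν*(ν/(2*γ)-1) - ν = ν^2/γ - 3*ν := by field_simp; ring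
        linarith
      have key : (ν/(2*γ)) * ((1 - t + r ^ (2*ν)) ^ (ν/(2*γ)-1) / r^ν)
          ≤ ν * (r^μ/(r*r)) := by
        calc (ν/(2*γ)) * ((1 - t + r ^ (2*ν)) ^ (ν/(2*γ)-1) / r^ν)
            ≤ (ν/(2*γ)) * (r ^ (2*ν*(ν/(2*γ)-1)) / r^ν) := by
              rw [← hb2]; gcongr
          _ = (ν/(2*γ)) * r ^ (2*ν*(ν/(2*γ)-1) - ν) := by rw [Real.rpow_sub hr]
          _ ≤ ν * r ^ (μ-2) := by
              apply mul_le_mul hpν (Real.rpow_le_rpow_of_exponent_ge hr hr1 hexp)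
                (by positivity) hν0.le
          _ = ν * (r^μ/(r*r)) := by rw [hb5]
      have hre : -1 * (ν/(2*γ)) * (1 - t + r ^ (2*ν)) ^ (ν/(2*γ)-1) / r^ν
          = -((ν/(2*γ)) * ((1 - t + r ^ (2*ν)) ^ (ν/(2*γ)-1) / r^ν)) := by ring
      rw [hre]
      linarith
    · -- t = 1 : not differentiable, deriv = 0
      subst ht1
      have hnd : ¬ DifferentiableAt ℝ (fun t' => superSol ν γ μ R r t') 1 := by
        intro h
        have hd := h.hasDerivAt
        have hright : HasDerivWithinAt (fun t' => superSol ν γ μ R r t') 0 (Ici 1) 1 := by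
          refine (hasDerivWithinAt_const (1:ℝ) (Ici 1)
            (((0:ℝ) + r ^ (2*ν)) ^ (ν/(2*γ)) / r^ν
              + (R/r)^ν + (ν+1)/(ν^2-μ^2) * r^μ)).congr ?_ ?_
          · intro y hy
            simp only [superSol]
            rw [max_eq_right (by simp only [mem_Ici] at hy; linarith : 1 - y ≤ (0:ℝ))]
          · simp only [superSol]
            rw [max_eq_right (by norm_num : (1:ℝ) - 1 ≤ 0)]
        have hbase : (0:ℝ) < 1 - 1 + r ^ (2*ν) := by linarith
        have h0 : HasDerivAt (fun t' : ℝ => 1 - t' + r ^ (2*ν)) (-1) 1 :=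
          ((hasDerivAt_id 1).const_sub 1).add_const _
        have hD : HasDerivAt (fun t' : ℝ => (1 - t' + r ^ (2*ν)) ^ (ν/(2*γ)) / r^ν
              + ((R/r)^ν + (ν+1)/(ν^2-μ^2) * r^μ))
            (-1 * (ν/(2*γ)) * (1 - 1 + r ^ (2*ν)) ^ (ν/(2*γ)-1) / r^ν) 1 :=
          ((h0.rpow_const (Or.inl hbase.ne')).div_const _).add_const _
        have hleft : HasDerivWithinAt (fun t' => superSol ν γ μ R r t')
            (-1 * (ν/(2*γ)) * (1 - 1 + r ^ (2*ν)) ^ (ν/(2*γ)-1) / r^ν) (Iic 1) 1 := by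
          refine hD.hasDerivWithinAt.congr ?_ ?_
          · intro y hy
            simp only [superSol]
            rw [max_eq_left (by simp only [mem_Iic] at hy; linarith : (0:ℝ) ≤ 1 - y)]
            ring
          · simp only [superSol]
            rw [max_eq_left (by norm_num : (0:ℝ) ≤ 1 - 1)]
            ring
        have hu1 : deriv (fun t' => superSol ν γ μ R r t') 1 = 0 := by
          rw [← (hd.hasDerivWithinAt (s := Ici 1)).derivWithin
            (uniqueDiffOn_Ici (1:ℝ) 1 Set.self_mem_Ici)]
          exact hright.derivWithin (uniqueDiffOn_Ici (1:ℝ) 1 Set.self_mem_Ici)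
        have hu2 : deriv (fun t' => superSol ν γ μ R r t') 1
            = -1 * (ν/(2*γ)) * (1 - 1 + r ^ (2*ν)) ^ (ν/(2*γ)-1) / r^ν := by
          rw [← (hd.hasDerivWithinAt (s := Iic 1)).derivWithin
            (uniqueDiffOn_Iic (1:ℝ) 1 Set.self_mem_Iic)]
          exact hleft.derivWithin (uniqueDiffOn_Iic (1:ℝ) 1 Set.self_mem_Iic)
        have hpos : (0:ℝ) < (ν/(2*γ)) * (1 - 1 + r ^ (2*ν)) ^ (ν/(2*γ)-1) / r^ν := by
          have := Real.rpow_pos_of_pos hbase (ν/(2*γ)-1)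
          positivity
        rw [hu1] at hu2
        have : -1 * (ν/(2*γ)) * (1 - 1 + r ^ (2*ν)) ^ (ν/(2*γ)-1) / r^ν
            = -((ν/(2*γ)) * (1 - 1 + r ^ (2*ν)) ^ (ν/(2*γ)-1) / r^ν) := by ring
        rw [this] at hu2
        linarith
      rw [deriv_zero_of_not_differentiableAt hnd]
      have : 0 < ν * (r^μ/(r*r)) := by positivity
      linarith
    · -- t > 1 : locally constant
      have hev : (fun t' => superSol ν γ μ R r t')
          =ᶠ[nhds t] fun _ => ((0:ℝ) + r ^ (2*ν)) ^ (ν/(2*γ)) / r^ν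
            + (R/r)^ν + (ν+1)/(ν^2-μ^2) * r^μ := by
        filter_upwards [Ioi_mem_nhds ht1] with y hy
        simp only [superSol]
        rw [max_eq_right (by simp only [mem_Ioi] at hy; linarith : 1 - y ≤ (0:ℝ))]
      rw [hev.deriv_eq, deriv_const]
      have : 0 < ν * (r^μ/(r*r)) := by positivity
      linarith
  -- assemble
  rw [hd2, hderiv1 r hr, hfeq r hr, deltaNu_eq hr hs, hb5]
  have hD1 : 4*ν^2*(ν/(2*γ))*((ν/(2*γ))-1)
      * ((max (1-t) 0 + r ^ (2*ν)) ^ (ν/(2*γ))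
          / ((max (1-t) 0 + r ^ (2*ν)) * (max (1-t) 0 + r ^ (2*ν))))
      * (r^ν * r^ν * r^ν / (r*r)) ≤ 0 := by
    have hA : (0:ℝ) < max (1-t) 0 + r ^ (2*ν) := by positivity
    have h1 : 4*ν^2*(ν/(2*γ))*((ν/(2*γ))-1) ≤ 0 :=
      mul_nonpos_of_nonneg_of_nonpos (by positivity) (by linarith)
    have h2 : (0:ℝ) ≤ (max (1-t) 0 + r ^ (2*ν)) ^ (ν/(2*γ))
        / ((max (1-t) 0 + r ^ (2*ν)) * (max (1-t) 0 + r ^ (2*ν))) := by positivity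
    have h3 : (0:ℝ) ≤ r^ν * r^ν * r^ν / (r*r) := by positivity
    exact mul_nonpos_of_nonpos_of_nonneg
      (mul_nonpos_of_nonpos_of_nonneg h1 h2) h3
  have hc2 : (ν+1)/(ν^2-μ^2) * (μ^2-ν^2) = -(ν+1) := by
    have hne : ν^2 - μ^2 ≠ 0 := by nlinarith
    field_simp
    ring
  rw [hc2]
  have hfin : ∀ a b M : ℝ, a ≥ -(ν*M) → b ≤ 0 → a - (b + -(ν+1) * M) ≥ M := by
    intro a b M ha hb
    nlinarith
  exact hfin _ _ _ htb hD1
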